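/- arXiv:2310.13179 — 9 statements merged into one kernel-verified Lean document; each statement's English description precedes it below -/
import Mathlib

section
/- Let q be an integer, R the free ℤ-algebra on non-commuting variables v, x, y₁, y₂, and I the two-sided ideal generated by r₁ = vx - xv, r₂ = vy₁ - y₂v, r₃ = vy₂ - y₁v, r₄ = xy₁ - y₁x + (1-q²)vy₁ - (1-q²)vy₂, r₅ = xy₂ - y₂x - (1-q²)vy₁ + (1-q²)vy₂, r₆ = y₁y₂ - y₂y₁ - (q-1)²(q+1)v²y₁ + (q-1)²(q+1)v²y₂ + (q-1)vxy₁ - (q-1)vxy₂, and r₇ = y₁y₂ + q²(q+1)²v⁴ + q(q²-1)v³x - qv²x² - (q-1)vxy₂ + q(q+1)v²y₁ + (1+q³)v²y₂. Then in R/I we have (y₁ + (1+q)v² + vx)(y₂ + (q²+q³)v² - qvx) = 0. -/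
noncomputable section

/-- The free `ℤ`-algebra on the four non-commuting variables `v, x, y₁, y₂`. -/
abbrev R : Type := FreeAlgebra ℤ (Fin 4)

def v : R := FreeAlgebra.ι ℤ 0
def x : R := FreeAlgebra.ι ℤ 1
def y₁ : R := FreeAlgebra.ι ℤ 2
def y₂ : R := FreeAlgebra.ι ℤ 3

def r₁ : R := v * x - x * v
def r₂ : R := v * y₁ - y₂ * v
def r₃ : R := v * y₂ - y₁ * v
def r₄ (q : ℤ) : R := x * y₁ - y₁ * x + (1 - (q : R) ^ 2) * (v * y₁)
  - (1 - (q : R) ^ 2) * (v * y₂)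
def r₅ (q : ℤ) : R := x * y₂ - y₂ * x - (1 - (q : R) ^ 2) * (v * y₁)
  + (1 - (q : R) ^ 2) * (v * y₂)
def r₆ (q : ℤ) : R := y₁ * y₂ - y₂ * y₁
  - ((q : R) - 1) ^ 2 * ((q : R) + 1) * (v ^ 2 * y₁)
  + ((q : R) - 1) ^ 2 * ((q : R) + 1) * (v ^ 2 * y₂)
  + ((q : R) - 1) * (v * x * y₁) - ((q : R) - 1) * (v * x * y₂)
def r₇ (q : ℤ) : R := y₁ * y₂ + (q : R) ^ 2 * ((q : R) + 1) ^ 2 * v ^ 4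
  + (q : R) * ((q : R) ^ 2 - 1) * (v ^ 3 * x) - (q : R) * (v ^ 2 * x ^ 2)
  - ((q : R) - 1) * (v * x * y₂) + (q : R) * ((q : R) + 1) * (v ^ 2 * y₁)
  + (1 + (q : R) ^ 3) * (v ^ 2 * y₂)

/-- The relation generating the two-sided ideal `I` spanned by `r₁,…,r₇`. -/
def rel (q : ℤ) : R → R → Prop := fun a b =>
  b = 0 ∧ (a = r₁ ∨ a = r₂ ∨ a = r₃ ∨ a = r₄ q ∨ a = r₅ q ∨ a = r₆ q ∨ a = r₇ q)

/-- The quotient `R/I` of the free algebra by the two-sided ideal generated by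
the seven relations: the paramodular Hecke algebra presentation. -/
abbrev H (q : ℤ) : Type := RingQuot (rel q)

/-- The quotient map `R → R/I`. -/
def mk (q : ℤ) : R →ₐ[ℤ] H q := RingQuot.mkAlgHom ℤ (rel q)

lemma mk_rel_zero (q : ℤ) {a : R} (h : a = r₁ ∨ a = r₂ ∨ a = r₃ ∨ a = r₄ q ∨ a = r₅ q
    ∨ a = r₆ q ∨ a = r₇ q) : mk q a = 0 := by
  have hr : rel q a 0 := ⟨rfl, h⟩
  have := RingQuot.mkAlgHom_rel ℤ hr
  simpa [mk] using this

lemma key_identity (q : ℤ) :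
    (y₁ + (1 + (q : R)) * v ^ 2 + v * x)
      * (y₂ + ((q : R) ^ 2 + (q : R) ^ 3) * v ^ 2 - (q : R) * (v * x))
    = r₇ q - ((q : R) ^ 2 + (q : R) ^ 3) * (r₃ * v) + (q : R) * (r₃ * x)
      + (q : R) * (v * r₅ q) - ((q : R) ^ 2 + (q : R) ^ 3) * (v * r₁ * v)
      + (q : R) * (v * r₁ * x) - ((q : R) ^ 2 + (q : R) ^ 3) * (v * r₂)
      - ((q : R) ^ 2 + (q : R) ^ 3) * (v ^ 2 * r₁) := by
  simp only [r₁, r₂, r₃, r₅, r₇]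
  simp only [mul_add, add_mul, mul_sub, sub_mul, mul_assoc]
  simp only [← Int.cast_pow, ← Int.cast_mul, ← Int.cast_one (R := R), ← Int.cast_add,
    ← Int.cast_sub]
  simp only [pow_succ, pow_zero, one_mul, mul_assoc, mul_add, add_mul, mul_sub, sub_mul]
  simp only [← zsmul_eq_mul, ← zsmul_eq_mul', smul_mul_assoc, mul_smul_comm, smul_smul,
    smul_add, smul_sub]
  module

theorem stmt_3' (q : ℤ) :
    mk q (y₁ + (1 + (q : R)) * v ^ 2 + v * x)
      * mk q (y₂ + ((q : R) ^ 2 + (q : R) ^ 3) * v ^ 2 - (q : R) * (v * x)) = 0 := by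
  rw [← map_mul, key_identity q]
  have h1 : mk q r₁ = 0 := mk_rel_zero q (by tauto)
  have h2 : mk q r₂ = 0 := mk_rel_zero q (by tauto)
  have h3 : mk q r₃ = 0 := mk_rel_zero q (by tauto)
  have h5 : mk q (r₅ q) = 0 := mk_rel_zero q (by tauto)
  have h7 : mk q (r₇ q) = 0 := mk_rel_zero q (by tauto)
  simp [map_add, map_sub, map_mul, h1, h2, h3, h5, h7]

/-- In `R/I` we have `(y₁ + (1+q)v² + vx)(y₂ + (q²+q³)v² - qvx) = 0`. -/
theorem stmt_3 (q : ℤ) :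
    mk q (y₁ + (1 + (q : R)) * v ^ 2 + v * x)
      * mk q (y₂ + ((q : R) ^ 2 + (q : R) ^ 3) * v ^ 2 - (q : R) * (v * x)) = 0 :=
  stmt_3' q
end
end

section
/- Let q be an integer, R the free ℤ-algebra on non-commuting variables v, x, y₁, y₂, and I the two-sided ideal generated by the seven relations r₁,...,r₇ as in the presentation of the paramodular Hecke algebra. Then the quotient R/I is spanned over ℤ by the images of the monomials v^a x^b y₁^{c₁} y₂^{c₂} with a,b,c₁,c₂ ≥ 0 and c₁c₂ = 0. -/
noncomputable section

namespace Aux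

def Vq (q : ℤ) : H q := mk q v
def Xq (q : ℤ) : H q := mk q x
def Y1q (q : ℤ) : H q := mk q y₁
def Y2q (q : ℤ) : H q := mk q y₂

def W (q : ℤ) : Submodule ℤ (H q) :=
  Submodule.span ℤ {w : H q | ∃ a b c₁ c₂ : ℕ, c₁ * c₂ = 0 ∧
    w = mk q (v ^ a * x ^ b * y₁ ^ c₁ * y₂ ^ c₂)}

variable (q : ℤ)

lemma mono_mk (a b c₁ c₂ : ℕ) :
    mk q (v ^ a * x ^ b * y₁ ^ c₁ * y₂ ^ c₂)
      = Vq q ^ a * Xq q ^ b * Y1q q ^ c₁ * Y2q q ^ c₂ := by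
  simp [Vq, Xq, Y1q, Y2q, map_mul, map_pow]

lemma mem_mono (a b c₁ c₂ : ℕ) (h : c₁ * c₂ = 0) :
    Vq q ^ a * Xq q ^ b * Y1q q ^ c₁ * Y2q q ^ c₂ ∈ W q :=
  Submodule.subset_span ⟨a, b, c₁, c₂, h, (mono_mk q a b c₁ c₂).symm⟩

lemma memW_of_eq {z w : H q} (h : z = w) (hw : w ∈ W q) : z ∈ W q := h ▸ hw

lemma cast_mul_mem (c : ℤ) {z : H q} (h : z ∈ W q) : ((c : H q)) * z ∈ W q := by
  rw [show ((c : H q)) = algebraMap ℤ (H q) c by simp, ← Algebra.smul_def]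
  exact Submodule.smul_mem _ _ h

lemma one_mem_W : (1 : H q) ∈ W q := by
  simpa using mem_mono q 0 0 0 0 (by simp)

lemma mk_zero (a : R) (h : rel q a 0) : mk q a = 0 := by
  have := RingQuot.mkAlgHom_rel ℤ h
  simpa [mk] using this

lemma R1' : Vq q * Xq q = Xq q * Vq q := by
  have h := mk_zero q r₁ ⟨rfl, by tauto⟩
  rw [r₁, map_sub, map_mul, map_mul, sub_eq_zero] at h
  exact h

lemma R2' : Vq q * Y1q q = Y2q q * Vq q := by
  have h := mk_zero q r₂ ⟨rfl, by tauto⟩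
  rw [r₂, map_sub, map_mul, map_mul, sub_eq_zero] at h
  exact h

lemma R3' : Vq q * Y2q q = Y1q q * Vq q := by
  have h := mk_zero q r₃ ⟨rfl, by tauto⟩
  rw [r₃, map_sub, map_mul, map_mul, sub_eq_zero] at h
  exact h

lemma R4' : Y1q q * Xq q = Xq q * Y1q q
    + ((1 - q ^ 2 : ℤ) : H q) * (Vq q * Y1q q)
    - ((1 - q ^ 2 : ℤ) : H q) * (Vq q * Y2q q) := by
  unfold Vq Xq Y1q Y2q
  have h := mk_zero q (r₄ q) ⟨rfl, by tauto⟩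
  rw [r₄] at h
  simp only [map_sub, map_add, map_mul, map_pow, map_one, map_intCast] at h
  linear_combination (norm := (push_cast; noncomm_ring)) -h

lemma R5' : Y2q q * Xq q = Xq q * Y2q q
    - ((1 - q ^ 2 : ℤ) : H q) * (Vq q * Y1q q)
    + ((1 - q ^ 2 : ℤ) : H q) * (Vq q * Y2q q) := by
  unfold Vq Xq Y1q Y2q
  have h := mk_zero q (r₅ q) ⟨rfl, by tauto⟩
  rw [r₅] at h
  simp only [map_sub, map_add, map_mul, map_pow, map_one, map_intCast] at h
  linear_combination (norm := (push_cast; noncomm_ring)) -h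

lemma R7' : Y1q q * Y2q q =
    -(((q ^ 2 * (q + 1) ^ 2 : ℤ) : H q) * (Vq q ^ 4))
    - ((q * (q ^ 2 - 1) : ℤ) : H q) * (Vq q ^ 3 * Xq q)
    + ((q : ℤ) : H q) * (Vq q ^ 2 * Xq q ^ 2)
    + ((q - 1 : ℤ) : H q) * (Vq q * Xq q * Y2q q)
    - ((q * (q + 1) : ℤ) : H q) * (Vq q ^ 2 * Y1q q)
    - ((1 + q ^ 3 : ℤ) : H q) * (Vq q ^ 2 * Y2q q) := by
  unfold Vq Xq Y1q Y2q
  have h := mk_zero q (r₇ q) ⟨rfl, by tauto⟩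
  rw [r₇] at h
  simp only [map_sub, map_add, map_mul, map_pow, map_one, map_intCast] at h
  linear_combination (norm := (push_cast; noncomm_ring)) h

lemma R6' : Y2q q * Y1q q = Y1q q * Y2q q
    - (((q - 1) ^ 2 * (q + 1) : ℤ) : H q) * (Vq q ^ 2 * Y1q q)
    + (((q - 1) ^ 2 * (q + 1) : ℤ) : H q) * (Vq q ^ 2 * Y2q q)
    + ((q - 1 : ℤ) : H q) * (Vq q * Xq q * Y1q q)
    - ((q - 1 : ℤ) : H q) * (Vq q * Xq q * Y2q q) := by
  unfold Vq Xq Y1q Y2q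
  have h := mk_zero q (r₆ q) ⟨rfl, by tauto⟩
  rw [r₆] at h
  simp only [map_sub, map_add, map_mul, map_pow, map_one, map_intCast] at h
  linear_combination (norm := (push_cast; noncomm_ring)) -h



section Generic
variable {A : Type} [Ring A]

lemma exp4 (V X Y1 Y2 t c : A)
    (h : Y1 * X = X * Y1 + c * (V * Y1) - c * (V * Y2)) :
    Y1 * (X * t) = X * (Y1 * t) + c * (V * (Y1 * t)) - c * (V * (Y2 * t)) := by
  rw [← mul_assoc, h]; noncomm_ring

lemma exp5 (V X Y1 Y2 t c : A)
    (h : Y2 * X = X * Y2 - c * (V * Y1) + c * (V * Y2)) :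
    Y2 * (X * t) = X * (Y2 * t) - c * (V * (Y1 * t)) + c * (V * (Y2 * t)) := by
  rw [← mul_assoc, h]; noncomm_ring

lemma exp7 (V X Y1 Y2 t g1 g2 g3 g4 g5 g6 : A)
    (h7 : Y1 * Y2 = -(g1 * (V ^ 4)) - g2 * (V ^ 3 * X) + g3 * (V ^ 2 * X ^ 2)
      + g4 * (V * X * Y2) - g5 * (V ^ 2 * Y1) - g6 * (V ^ 2 * Y2)) :
    Y1 * (Y2 * t) = -(g1 * (V * (V * (V * (V * t))))) - g2 * (V * (V * (V * (X * t))))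
      + g3 * (V * (V * (X * (X * t)))) + g4 * (V * (X * (Y2 * t)))
      - g5 * (V * (V * (Y1 * t))) - g6 * (V * (V * (Y2 * t))) := by
  rw [← mul_assoc, h7]; noncomm_ring

lemma exp6 (V X Y1 Y2 t g1 g2 g3 g4 g5 g6 a1 a2 : A)
    (h7 : Y1 * Y2 = -(g1 * (V ^ 4)) - g2 * (V ^ 3 * X) + g3 * (V ^ 2 * X ^ 2)
      + g4 * (V * X * Y2) - g5 * (V ^ 2 * Y1) - g6 * (V ^ 2 * Y2))
    (h6 : Y2 * Y1 = Y1 * Y2 - a1 * (V ^ 2 * Y1) + a1 * (V ^ 2 * Y2)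
      + a2 * (V * X * Y1) - a2 * (V * X * Y2)) :
    Y2 * (Y1 * t) = -(g1 * (V * (V * (V * (V * t))))) - g2 * (V * (V * (V * (X * t))))
      + g3 * (V * (V * (X * (X * t)))) + g4 * (V * (X * (Y2 * t)))
      - g5 * (V * (V * (Y1 * t))) - g6 * (V * (V * (Y2 * t)))
      - a1 * (V * (V * (Y1 * t))) + a1 * (V * (V * (Y2 * t)))
      + a2 * (V * (X * (Y1 * t))) - a2 * (V * (X * (Y2 * t))) := by
  rw [← mul_assoc, h6, h7]; noncomm_ring

end Generic
-- basic closure lemmas (inside namespace Aux, variable (q))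

lemma hV {z : H q} (hz : z ∈ W q) : Vq q * z ∈ W q := by
  induction hz using Submodule.span_induction with
  | mem w hw =>
    obtain ⟨a, b, c₁, c₂, h, rfl⟩ := hw
    refine memW_of_eq q ?_ (mem_mono q (a + 1) b c₁ c₂ h)
    rw [mono_mk, pow_succ' (Vq q) a]
    simp only [mul_assoc]
  | zero => rw [mul_zero]; exact zero_mem _
  | add a b _ _ ha hb => rw [mul_add]; exact add_mem ha hb
  | smul r a _ h => rw [mul_smul_comm]; exact Submodule.smul_mem _ _ h

lemma XVpow (a : ℕ) : Xq q * Vq q ^ a = Vq q ^ a * Xq q := by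
  induction a with
  | zero => simp
  | succ n ihn =>
    rw [pow_succ, ← mul_assoc, ihn, mul_assoc, ← R1' q, ← mul_assoc]

lemma hX {z : H q} (hz : z ∈ W q) : Xq q * z ∈ W q := by
  induction hz using Submodule.span_induction with
  | mem w hw =>
    obtain ⟨a, b, c₁, c₂, h, rfl⟩ := hw
    refine memW_of_eq q ?_ (mem_mono q a (b + 1) c₁ c₂ h)
    rw [mono_mk, pow_succ' (Xq q) b]
    simp only [mul_assoc]
    rw [← mul_assoc (Xq q) (Vq q ^ a), XVpow, mul_assoc]
  | zero => rw [mul_zero]; exact zero_mem _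
  | add a b _ _ ha hb => rw [mul_add]; exact add_mem ha hb
  | smul r a _ h => rw [mul_smul_comm]; exact Submodule.smul_mem _ _ h

lemma hVpow (a : ℕ) {z : H q} (hz : z ∈ W q) : Vq q ^ a * z ∈ W q := by
  induction a with
  | zero => simpa using hz
  | succ n ihn => rw [pow_succ' (Vq q) n, mul_assoc]; exact hV q ihn

lemma hXpow (b : ℕ) {z : H q} (hz : z ∈ W q) : Xq q ^ b * z ∈ W q := by
  induction b with
  | zero => simpa using hz
  | succ n ihn => rw [pow_succ' (Xq q) n, mul_assoc]; exact hX q ihn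

lemma YVpow (a : ℕ) :
    (Y1q q * Vq q ^ a = Vq q ^ a * Y1q q ∧ Y2q q * Vq q ^ a = Vq q ^ a * Y2q q) ∨
    (Y1q q * Vq q ^ a = Vq q ^ a * Y2q q ∧ Y2q q * Vq q ^ a = Vq q ^ a * Y1q q) := by
  have h1 : Y1q q * Vq q = Vq q * Y2q q := (R3' q).symm
  have h2 : Y2q q * Vq q = Vq q * Y1q q := (R2' q).symm
  induction a with
  | zero => left; simp
  | succ n ihn =>
    rw [pow_succ' (Vq q) n]
    rcases ihn with ⟨e1, e2⟩ | ⟨e1, e2⟩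
    · right
      constructor
      · rw [← mul_assoc, h1, mul_assoc, e2, ← mul_assoc]
      · rw [← mul_assoc, h2, mul_assoc, e1, ← mul_assoc]
    · left
      constructor
      · rw [← mul_assoc, h1, mul_assoc, e2, ← mul_assoc]
      · rw [← mul_assoc, h2, mul_assoc, e1, ← mul_assoc]
lemma key : ∀ n b c₁ c₂ : ℕ, b + c₁ + c₂ = n → c₁ * c₂ = 0 →
    Y1q q * (Xq q ^ b * (Y1q q ^ c₁ * Y2q q ^ c₂)) ∈ W q ∧
    Y2q q * (Xq q ^ b * (Y1q q ^ c₁ * Y2q q ^ c₂)) ∈ W q := by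
  intro n
  induction n using Nat.strong_induction_on with
  | _ n ih =>
  intro b c₁ c₂ hn hc
  rcases b with _ | B
  · rcases c₂ with _ | m
    · constructor
      · refine memW_of_eq q ?_ (mem_mono q 0 0 (c₁ + 1) 0 (by simp))
        rw [pow_succ' (Y1q q) c₁]
        simp [mul_assoc]
      · rcases c₁ with _ | k
        · refine memW_of_eq q ?_ (mem_mono q 0 0 0 1 (by simp))
          simp
        · have ihk := ih k (by omega) 0 k 0 (by omega) (by simp)
          have ih2 : Y2q q * Y1q q ^ k ∈ W q := by simpa using ihk.2
          have egoal : Xq q ^ 0 * (Y1q q ^ (k + 1) * Y2q q ^ 0) = Y1q q * Y1q q ^ k := by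
            rw [pow_succ' (Y1q q) k]; simp
          rw [egoal,
            exp6 (Vq q) (Xq q) (Y1q q) (Y2q q) (Y1q q ^ k) _ _ _ _ _ _ _ _ (R7' q) (R6' q)]
          have l1 : Vq q * (Vq q * (Vq q * (Vq q * Y1q q ^ k))) ∈ W q := by
            refine memW_of_eq q ?_ (mem_mono q 4 0 k 0 (by simp)); noncomm_ring
          have l2 : Vq q * (Vq q * (Vq q * (Xq q * Y1q q ^ k))) ∈ W q := by
            refine memW_of_eq q ?_ (mem_mono q 3 1 k 0 (by simp)); noncomm_ring
          have l3 : Vq q * (Vq q * (Xq q * (Xq q * Y1q q ^ k))) ∈ W q := by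
            refine memW_of_eq q ?_ (mem_mono q 2 2 k 0 (by simp)); noncomm_ring
          have l4 : Vq q * (Xq q * (Y2q q * Y1q q ^ k)) ∈ W q := hV q (hX q ih2)
          have l5 : Vq q * (Vq q * (Y1q q * Y1q q ^ k)) ∈ W q := by
            refine memW_of_eq q ?_ (mem_mono q 2 0 (k + 1) 0 (by simp))
            rw [pow_succ' (Y1q q) k]
            generalize Y1q q ^ k = t
            noncomm_ring
          have l6 : Vq q * (Vq q * (Y2q q * Y1q q ^ k)) ∈ W q := hV q (hV q ih2)
          have l9 : Vq q * (Xq q * (Y1q q * Y1q q ^ k)) ∈ W q := by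
            refine memW_of_eq q ?_ (mem_mono q 1 1 (k + 1) 0 (by simp))
            rw [pow_succ' (Y1q q) k]
            generalize Y1q q ^ k = t
            noncomm_ring
          refine sub_mem (add_mem (add_mem (sub_mem (sub_mem (sub_mem (add_mem (add_mem
            (sub_mem (neg_mem ?_) ?_) ?_) ?_) ?_) ?_) ?_) ?_) ?_) ?_ <;>
            exact cast_mul_mem q _ (by assumption)
    · rcases Nat.mul_eq_zero.mp hc with h0 | h0
      · subst h0
        constructor
        · have ihm := ih m (by omega) 0 0 m (by omega) (by simp)
          have ih1 : Y1q q * Y2q q ^ m ∈ W q := by simpa using ihm.1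
          have egoal : Xq q ^ 0 * (Y1q q ^ 0 * Y2q q ^ (m + 1)) = Y2q q * Y2q q ^ m := by
            rw [pow_succ' (Y2q q) m]; simp
          rw [egoal, exp7 (Vq q) (Xq q) (Y1q q) (Y2q q) (Y2q q ^ m) _ _ _ _ _ _ (R7' q)]
          have l1 : Vq q * (Vq q * (Vq q * (Vq q * Y2q q ^ m))) ∈ W q := by
            refine memW_of_eq q ?_ (mem_mono q 4 0 0 m (by simp)); noncomm_ring
          have l2 : Vq q * (Vq q * (Vq q * (Xq q * Y2q q ^ m))) ∈ W q := by
            refine memW_of_eq q ?_ (mem_mono q 3 1 0 m (by simp)); noncomm_ring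
          have l3 : Vq q * (Vq q * (Xq q * (Xq q * Y2q q ^ m))) ∈ W q := by
            refine memW_of_eq q ?_ (mem_mono q 2 2 0 m (by simp)); noncomm_ring
          have l4 : Vq q * (Xq q * (Y2q q * Y2q q ^ m)) ∈ W q := by
            refine memW_of_eq q ?_ (mem_mono q 1 1 0 (m + 1) (by simp))
            rw [pow_succ' (Y2q q) m]
            generalize Y2q q ^ m = t
            noncomm_ring
          have l5 : Vq q * (Vq q * (Y1q q * Y2q q ^ m)) ∈ W q := hV q (hV q ih1)
          have l6 : Vq q * (Vq q * (Y2q q * Y2q q ^ m)) ∈ W q := by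
            refine memW_of_eq q ?_ (mem_mono q 2 0 0 (m + 1) (by simp))
            rw [pow_succ' (Y2q q) m]
            generalize Y2q q ^ m = t
            noncomm_ring
          refine sub_mem (sub_mem (add_mem (add_mem (sub_mem (neg_mem ?_) ?_) ?_) ?_) ?_) ?_ <;>
            exact cast_mul_mem q _ (by assumption)
        · refine memW_of_eq q ?_ (mem_mono q 0 0 0 (m + 1 + 1) (by simp))
          rw [pow_succ' (Y2q q) (m + 1)]
          generalize Y2q q ^ (m + 1) = t
          simp [mul_assoc]
      · omega
  · have ihB := ih (B + c₁ + c₂) (by omega) B c₁ c₂ rfl hc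
    have et : Xq q ^ (B + 1) * (Y1q q ^ c₁ * Y2q q ^ c₂)
        = Xq q * (Xq q ^ B * (Y1q q ^ c₁ * Y2q q ^ c₂)) := by
      rw [pow_succ' (Xq q) B, mul_assoc]
    constructor
    · rw [et, exp4 (Vq q) (Xq q) (Y1q q) (Y2q q) _ _ (R4' q)]
      exact sub_mem (add_mem (hX q ihB.1) (cast_mul_mem q _ (hV q ihB.1)))
        (cast_mul_mem q _ (hV q ihB.2))
    · rw [et, exp5 (Vq q) (Xq q) (Y1q q) (Y2q q) _ _ (R5' q)]
      exact add_mem (sub_mem (hX q ihB.2) (cast_mul_mem q _ (hV q ihB.1)))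
        (cast_mul_mem q _ (hV q ihB.2))

lemma hY1 {z : H q} (hz : z ∈ W q) : Y1q q * z ∈ W q := by
  induction hz using Submodule.span_induction with
  | mem w hw =>
    obtain ⟨a, b, c₁, c₂, h, rfl⟩ := hw
    rw [mono_mk]
    have hk := key q (b + c₁ + c₂) b c₁ c₂ rfl h
    rcases YVpow q a with ⟨e1, e2⟩ | ⟨e1, e2⟩
    · refine memW_of_eq q ?_ (hVpow q a hk.1)
      simp only [mul_assoc]
      rw [← mul_assoc (Y1q q) (Vq q ^ a), e1, mul_assoc]
    · refine memW_of_eq q ?_ (hVpow q a hk.2)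
      simp only [mul_assoc]
      rw [← mul_assoc (Y1q q) (Vq q ^ a), e1, mul_assoc]
  | zero => rw [mul_zero]; exact zero_mem _
  | add a b _ _ ha hb => rw [mul_add]; exact add_mem ha hb
  | smul r a _ h => rw [mul_smul_comm]; exact Submodule.smul_mem _ _ h

lemma hY2 {z : H q} (hz : z ∈ W q) : Y2q q * z ∈ W q := by
  induction hz using Submodule.span_induction with
  | mem w hw =>
    obtain ⟨a, b, c₁, c₂, h, rfl⟩ := hw
    rw [mono_mk]
    have hk := key q (b + c₁ + c₂) b c₁ c₂ rfl h
    rcases YVpow q a with ⟨e1, e2⟩ | ⟨e1, e2⟩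
    · refine memW_of_eq q ?_ (hVpow q a hk.2)
      simp only [mul_assoc]
      rw [← mul_assoc (Y2q q) (Vq q ^ a), e2, mul_assoc]
    · refine memW_of_eq q ?_ (hVpow q a hk.1)
      simp only [mul_assoc]
      rw [← mul_assoc (Y2q q) (Vq q ^ a), e2, mul_assoc]
  | zero => rw [mul_zero]; exact zero_mem _
  | add a b _ _ ha hb => rw [mul_add]; exact add_mem ha hb
  | smul r a _ h => rw [mul_smul_comm]; exact Submodule.smul_mem _ _ h

lemma hY1pow (c : ℕ) {z : H q} (hz : z ∈ W q) : Y1q q ^ c * z ∈ W q := by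
  induction c with
  | zero => simpa using hz
  | succ n ihn => rw [pow_succ' (Y1q q) n, mul_assoc]; exact hY1 q ihn

lemma hY2pow (c : ℕ) {z : H q} (hz : z ∈ W q) : Y2q q ^ c * z ∈ W q := by
  induction c with
  | zero => simpa using hz
  | succ n ihn => rw [pow_succ' (Y2q q) n, mul_assoc]; exact hY2 q ihn

lemma hMulW {z₁ z₂ : H q} (h1 : z₁ ∈ W q) (h2 : z₂ ∈ W q) : z₁ * z₂ ∈ W q := by
  induction h1 using Submodule.span_induction with
  | mem w hw =>
    obtain ⟨a, b, c₁, c₂, h, rfl⟩ := hw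
    rw [mono_mk]
    refine memW_of_eq q ?_ (hVpow q a (hXpow q b (hY1pow q c₁ (hY2pow q c₂ h2))))
    simp only [mul_assoc]
  | zero => rw [zero_mul]; exact zero_mem _
  | add a b _ _ ha hb => rw [add_mul]; exact add_mem ha hb
  | smul r a _ h => rw [smul_mul_assoc]; exact Submodule.smul_mem _ _ h

lemma final (z : H q) : z ∈ W q := by
  obtain ⟨r, rfl⟩ := RingQuot.mkAlgHom_surjective ℤ (rel q) z
  show mk q r ∈ W q
  induction r using FreeAlgebra.induction with
  | grade0 r =>
    rw [AlgHom.commutes, Algebra.algebraMap_eq_smul_one]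
    exact Submodule.smul_mem _ _ (one_mem_W q)
  | grade1 i =>
    fin_cases i
    · exact Submodule.subset_span ⟨1, 0, 0, 0, rfl, by simp [v]⟩
    · exact Submodule.subset_span ⟨0, 1, 0, 0, rfl, by simp [x]⟩
    · exact Submodule.subset_span ⟨0, 0, 1, 0, rfl, by simp [y₁]⟩
    · exact Submodule.subset_span ⟨0, 0, 0, 1, rfl, by simp [y₂]⟩
  | mul a b ha hb => rw [map_mul]; exact hMulW q ha hb
  | add a b ha hb => rw [map_add]; exact add_mem ha hb
end Aux


/-- `R/I` is spanned over `ℤ` by the images of the monomials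
`v^a x^b y₁^{c₁} y₂^{c₂}` with `c₁ c₂ = 0`. -/
theorem stmt_4 (q : ℤ) (z : H q) :
    z ∈ Submodule.span ℤ {w : H q | ∃ a b c₁ c₂ : ℕ, c₁ * c₂ = 0 ∧
      w = mk q (v ^ a * x ^ b * y₁ ^ c₁ * y₂ ^ c₂)} := by
  exact Aux.final q z
end
end

section
/- Let q be an integer and let ε ∈ ℂ*, λ ∈ ℂ, and set μ = -(1+q)ε² - ελ. Then the ℂ-algebra homomorphism η from the free ℤ-algebra on v, x, y₁, y₂ to ℂ determined by η(v)=ε, η(x)=λ, η(y₁)=η(y₂)=μ annihilates all seven relations r₁,...,r₇ of the paramodular Hecke algebra presentation. -/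
noncomputable section

/-- For `ε ≠ 0`, `μ = -(1+q)ε² - ελ`, the homomorphism `η` from the free algebra
to `ℂ` with `η(v)=ε, η(x)=λ, η(y₁)=η(y₂)=μ` annihilates all seven relations. -/
theorem stmt_6 (q : ℤ) (ε lam : ℂ) (hε : ε ≠ 0)
    (μ : ℂ) (hμ : μ = -(1 + (q : ℂ)) * ε ^ 2 - ε * lam) :
    letI η : R →ₐ[ℤ] ℂ := FreeAlgebra.lift ℤ ![ε, lam, μ, μ]
    η r₁ = 0 ∧ η r₂ = 0 ∧ η r₃ = 0 ∧ η (r₄ q) = 0 ∧ η (r₅ q) = 0 ∧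
      η (r₆ q) = 0 ∧ η (r₇ q) = 0 := by
  subst hμ
  simp only [r₁, r₂, r₃, r₄, r₅, r₆, r₇, v, x, y₁, y₂, map_sub, map_add, map_mul, map_pow,
    map_intCast, map_one, FreeAlgebra.lift_ι_apply, Matrix.cons_val_zero, Matrix.cons_val_one,
    Matrix.head_cons, Matrix.cons_val_two, Matrix.tail_cons, Matrix.cons_val_three]
  refine ⟨by ring, by ring, by ring, by ring, by ring, by ring, by ring⟩
end
end

section
/- Let q be an integer and let ε ∈ ℂ*, λ ∈ ℂ, and set μ = -(q²+q³)ε² + qελ. Then the ℂ-algebra homomorphism η from the free ℤ-algebra on v, x, y₁, y₂ to ℂ determined by η(v)=ε, η(x)=λ, η(y₁)=η(y₂)=μ annihilates all seven relations r₁,...,r₇ of the paramodular Hecke algebra presentation. -/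
noncomputable section

/-- For `ε ≠ 0`, `μ = -(q²+q³)ε² + qελ`, the homomorphism `η` from the free
algebra to `ℂ` with `η(v)=ε, η(x)=λ, η(y₁)=η(y₂)=μ` annihilates all seven
relations. -/
theorem stmt_7 (q : ℤ) (ε lam : ℂ) (hε : ε ≠ 0)
    (μ : ℂ) (hμ : μ = -((q : ℂ) ^ 2 + (q : ℂ) ^ 3) * ε ^ 2 + (q : ℂ) * ε * lam) :
    letI η : R →ₐ[ℤ] ℂ := FreeAlgebra.lift ℤ ![ε, lam, μ, μ]
    η r₁ = 0 ∧ η r₂ = 0 ∧ η r₃ = 0 ∧ η (r₄ q) = 0 ∧ η (r₅ q) = 0 ∧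
      η (r₆ q) = 0 ∧ η (r₇ q) = 0 := by
  subst hμ
  simp only [r₁, r₂, r₃, r₄, r₅, r₆, r₇, v, x, y₁, y₂, map_sub, map_add, map_mul, map_pow,
    map_intCast, map_one, FreeAlgebra.lift_ι_apply, Matrix.cons_val_zero, Matrix.cons_val_one,
    Matrix.head_cons, Matrix.cons_val_two, Matrix.tail_cons, Matrix.cons_val_three]
  refine ⟨by ring, by ring, by ring, by ring, by ring, by ring, by ring⟩
end
end

section
/- Let q be an integer, R the free ℤ-algebra on v, x, y₁, y₂ and I the two-sided ideal generated by the seven relations r₁,...,r₇ of the paramodular Hecke algebra. Then in R/I, the element z₁ = x - (q²-1)v commutes with each of v, x, y₁, and y₂. -/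
noncomputable section

lemma qc (q : ℤ) (a b : R) : a * ((q : R) * b) = (q : R) * (a * b) :=
  ((Int.cast_commute q a).symm).left_comm b

lemma qc' (q : ℤ) (a : R) : a * (q : R) = (q : R) * a :=
  ((Int.cast_commute q a).symm).eq

/-- In `R/I` the element `z₁ = x - (q²-1)v` commutes with `v, x, y₁, y₂`. -/
theorem stmt_8 (q : ℤ) :
    mk q (x - ((q : R) ^ 2 - 1) * v) * mk q v = mk q v * mk q (x - ((q : R) ^ 2 - 1) * v) ∧
    mk q (x - ((q : R) ^ 2 - 1) * v) * mk q x = mk q x * mk q (x - ((q : R) ^ 2 - 1) * v) ∧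
    mk q (x - ((q : R) ^ 2 - 1) * v) * mk q y₁ = mk q y₁ * mk q (x - ((q : R) ^ 2 - 1) * v) ∧
    mk q (x - ((q : R) ^ 2 - 1) * v) * mk q y₂ = mk q y₂ * mk q (x - ((q : R) ^ 2 - 1) * v) := by
  have h0 : ∀ a : R, rel q a 0 → mk q a = 0 := fun a h => by
    simpa [mk] using RingQuot.mkAlgHom_rel ℤ h
  have h1 : mk q r₁ = 0 := h0 _ ⟨rfl, Or.inl rfl⟩
  have h2 : mk q r₂ = 0 := h0 _ ⟨rfl, Or.inr (Or.inl rfl)⟩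
  have h3 : mk q r₃ = 0 := h0 _ ⟨rfl, Or.inr (Or.inr (Or.inl rfl))⟩
  have h4 : mk q (r₄ q) = 0 := h0 _ ⟨rfl, Or.inr (Or.inr (Or.inr (Or.inl rfl)))⟩
  have h5 : mk q (r₅ q) = 0 := h0 _ ⟨rfl, Or.inr (Or.inr (Or.inr (Or.inr (Or.inl rfl))))⟩
  refine ⟨?_, ?_, ?_, ?_⟩
  · rw [← sub_eq_zero]
    have e : (x - ((q : R) ^ 2 - 1) * v) * v - v * (x - ((q : R) ^ 2 - 1) * v)
        = (-1 : R) * r₁ := by unfold r₁; noncomm_ring <;> simp only [qc, qc'] <;> abel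
    rw [← map_mul, ← map_mul, ← map_sub, e, map_mul, h1, mul_zero]
  · rw [← sub_eq_zero]
    have e : (x - ((q : R) ^ 2 - 1) * v) * x - x * (x - ((q : R) ^ 2 - 1) * v)
        = (-((q : R) ^ 2 - 1)) * r₁ := by unfold r₁; noncomm_ring <;> simp only [qc, qc'] <;> abel
    rw [← map_mul, ← map_mul, ← map_sub, e, map_mul, h1, mul_zero]
  · rw [← sub_eq_zero]
    have e : (x - ((q : R) ^ 2 - 1) * v) * y₁ - y₁ * (x - ((q : R) ^ 2 - 1) * v)
        = r₄ q + (-((q : R) ^ 2 - 1)) * r₃ := by unfold r₃ r₄; noncomm_ring <;> simp only [qc, qc'] <;> abel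
    rw [← map_mul, ← map_mul, ← map_sub, e, map_add, map_mul, h3, h4, mul_zero, add_zero]
  · rw [← sub_eq_zero]
    have e : (x - ((q : R) ^ 2 - 1) * v) * y₂ - y₂ * (x - ((q : R) ^ 2 - 1) * v)
        = r₅ q + (-((q : R) ^ 2 - 1)) * r₂ := by unfold r₂ r₅; noncomm_ring <;> simp only [qc, qc'] <;> abel
    rw [← map_mul, ← map_mul, ← map_sub, e, map_add, map_mul, h2, h5, mul_zero, add_zero]
end
end

section
/- Let q be an integer, R the free ℤ-algebra on v, x, y₁, y₂ and I the two-sided ideal generated by the seven relations r₁,...,r₇ of the paramodular Hecke algebra. Then in R/I, the element z₂ = (q-1)vx - (y₁+y₂) commutes with each of v, x, y₁, and y₂. -/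
noncomputable section

-- Scalar coefficients rewritten as `ℤ`-scalar multiples of `1`.

lemma cast_smul₁ (q : ℤ) : ((q : R) - 1) = (q - 1 : ℤ) • (1 : R) := by
  rw [zsmul_eq_mul, mul_one]; norm_cast

lemma cast_smul₂ (q : ℤ) : (1 - (q : R) ^ 2) = (1 - q ^ 2 : ℤ) • (1 : R) := by
  rw [zsmul_eq_mul, mul_one]; norm_cast

lemma cast_smul₃ (q : ℤ) :
    ((q : R) - 1) ^ 2 * ((q : R) + 1) = ((q - 1) ^ 2 * (q + 1) : ℤ) • (1 : R) := by
  rw [zsmul_eq_mul, mul_one]; norm_cast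

-- Identities in the free algebra `R`: the commutators of `z₂ = (q-1)vx - (y₁+y₂)`
-- with the generators are two-sided ideal combinations of the relations.

lemma key_v (q : ℤ) :
    (((q : R) - 1) * (v * x) - (y₁ + y₂)) * v - v * (((q : R) - 1) * (v * x) - (y₁ + y₂))
      = -(((q : R) - 1) * (v * r₁)) + r₂ + r₃ := by
  simp only [r₁, r₂, r₃]
  simp only [cast_smul₁ q]
  simp only [smul_mul_assoc, mul_smul_comm, one_mul, smul_sub, smul_add, smul_neg, smul_smul,
    mul_sub, sub_mul, mul_add, add_mul, mul_assoc, pow_two]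
  match_scalars <;> ring

lemma key_x (q : ℤ) :
    (((q : R) - 1) * (v * x) - (y₁ + y₂)) * x - x * (((q : R) - 1) * (v * x) - (y₁ + y₂))
      = ((q : R) - 1) * (r₁ * x) + r₄ q + r₅ q := by
  simp only [r₁, r₄, r₅]
  simp only [cast_smul₁ q, cast_smul₂ q]
  simp only [smul_mul_assoc, mul_smul_comm, one_mul, smul_sub, smul_add, smul_neg, smul_smul,
    mul_sub, sub_mul, mul_add, add_mul, mul_assoc, pow_two]
  match_scalars <;> ring

lemma key_y₁ (q : ℤ) :
    (((q : R) - 1) * (v * x) - (y₁ + y₂)) * y₁ - y₁ * (((q : R) - 1) * (v * x) - (y₁ + y₂))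
      = ((q : R) - 1) * (v * r₅ q) + ((q : R) - 1) * (r₃ * x) + r₆ q := by
  simp only [r₃, r₅, r₆]
  simp only [cast_smul₃ q]
  simp only [cast_smul₁ q, cast_smul₂ q]
  simp only [smul_mul_assoc, mul_smul_comm, one_mul, smul_sub, smul_add, smul_neg, smul_smul,
    mul_sub, sub_mul, mul_add, add_mul, mul_assoc, pow_two]
  match_scalars <;> ring

lemma key_y₂ (q : ℤ) :
    (((q : R) - 1) * (v * x) - (y₁ + y₂)) * y₂ - y₂ * (((q : R) - 1) * (v * x) - (y₁ + y₂))
      = ((q : R) - 1) * (v * r₄ q) + ((q : R) - 1) * (r₂ * x) - r₆ q := by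
  simp only [r₂, r₄, r₆]
  simp only [cast_smul₃ q]
  simp only [cast_smul₁ q, cast_smul₂ q]
  simp only [smul_mul_assoc, mul_smul_comm, one_mul, smul_sub, smul_add, smul_neg, smul_smul,
    mul_sub, sub_mul, mul_add, add_mul, mul_assoc, pow_two]
  match_scalars <;> ring

-- The images of the relations vanish in the quotient.

lemma mk_r₁ (q : ℤ) : mk q r₁ = 0 := by
  have h : rel q r₁ 0 := ⟨rfl, Or.inl rfl⟩
  have h2 := RingQuot.mkAlgHom_rel ℤ h
  rw [mk, h2, map_zero]

lemma mk_r₂ (q : ℤ) : mk q r₂ = 0 := by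
  have h : rel q r₂ 0 := ⟨rfl, Or.inr (Or.inl rfl)⟩
  have h2 := RingQuot.mkAlgHom_rel ℤ h
  rw [mk, h2, map_zero]

lemma mk_r₃ (q : ℤ) : mk q r₃ = 0 := by
  have h : rel q r₃ 0 := ⟨rfl, Or.inr (Or.inr (Or.inl rfl))⟩
  have h2 := RingQuot.mkAlgHom_rel ℤ h
  rw [mk, h2, map_zero]

lemma mk_r₄ (q : ℤ) : mk q (r₄ q) = 0 := by
  have h : rel q (r₄ q) 0 := ⟨rfl, Or.inr (Or.inr (Or.inr (Or.inl rfl)))⟩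
  have h2 := RingQuot.mkAlgHom_rel ℤ h
  rw [mk, h2, map_zero]

lemma mk_r₅ (q : ℤ) : mk q (r₅ q) = 0 := by
  have h : rel q (r₅ q) 0 := ⟨rfl, Or.inr (Or.inr (Or.inr (Or.inr (Or.inl rfl))))⟩
  have h2 := RingQuot.mkAlgHom_rel ℤ h
  rw [mk, h2, map_zero]

lemma mk_r₆ (q : ℤ) : mk q (r₆ q) = 0 := by
  have h : rel q (r₆ q) 0 := ⟨rfl, Or.inr (Or.inr (Or.inr (Or.inr (Or.inr (Or.inl rfl)))))⟩
  have h2 := RingQuot.mkAlgHom_rel ℤ h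
  rw [mk, h2, map_zero]

/-- In `R/I` the element `z₂ = (q-1)vx - (y₁+y₂)` commutes with `v, x, y₁, y₂`. -/
theorem stmt_9 (q : ℤ) :
    mk q (((q : R) - 1) * (v * x) - (y₁ + y₂)) * mk q v
        = mk q v * mk q (((q : R) - 1) * (v * x) - (y₁ + y₂)) ∧
    mk q (((q : R) - 1) * (v * x) - (y₁ + y₂)) * mk q x
        = mk q x * mk q (((q : R) - 1) * (v * x) - (y₁ + y₂)) ∧
    mk q (((q : R) - 1) * (v * x) - (y₁ + y₂)) * mk q y₁
        = mk q y₁ * mk q (((q : R) - 1) * (v * x) - (y₁ + y₂)) ∧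
    mk q (((q : R) - 1) * (v * x) - (y₁ + y₂)) * mk q y₂
        = mk q y₂ * mk q (((q : R) - 1) * (v * x) - (y₁ + y₂)) := by
  refine ⟨?_, ?_, ?_, ?_⟩ <;> rw [← sub_eq_zero, ← map_mul, ← map_mul, ← map_sub]
  · rw [key_v q]
    simp only [map_add, map_neg, map_mul, mk_r₁, mk_r₂, mk_r₃, mul_zero, neg_zero, add_zero,
      zero_add]
  · rw [key_x q]
    simp only [map_add, map_mul, mk_r₁, mk_r₄, mk_r₅, mul_zero, zero_mul, add_zero, zero_add]
  · rw [key_y₁ q]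
    simp only [map_add, map_mul, mk_r₃, mk_r₅, mk_r₆, mul_zero, zero_mul, add_zero, zero_add]
  · rw [key_y₂ q]
    simp only [map_add, map_sub, map_mul, mk_r₂, mk_r₄, mk_r₆, mul_zero, zero_mul, add_zero,
      zero_add, sub_zero, sub_self]
end
end

section
/- Let q be an integer with q ≥ 2, and for k ≥ 0 define c(k) = (1 + q² - 2q^{2k+1}(1+q+q²) + q^{3k+1}(1+q+q²+q³)) / ((q-1)²(1+q+q²)). Then c(k) is an integer for all k ≥ 0 and, as formal power series over ℚ, (1 - (1+q²+q³)t + (q²+q³+q⁵)t² - q⁵t³) · ∑_{k≥0} c(k) t^k = 1 + (q+q²)t + q³t². -/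
open PowerSeries

/-- The index character values `c(k)` are integers, and their generating
series satisfies the stated rational identity. -/
theorem stmt_13 (q : ℤ) (hq : 2 ≤ q) :
    (∀ k : ℕ, ((q - 1) ^ 2 * (1 + q + q ^ 2)) ∣
      (1 + q ^ 2 - 2 * q ^ (2 * k + 1) * (1 + q + q ^ 2)
        + q ^ (3 * k + 1) * (1 + q + q ^ 2 + q ^ 3))) ∧
    (1 - PowerSeries.C (1 + (q : ℚ) ^ 2 + (q : ℚ) ^ 3) * X
        + PowerSeries.C ((q : ℚ) ^ 2 + (q : ℚ) ^ 3 + (q : ℚ) ^ 5) * X ^ 2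
        - PowerSeries.C ((q : ℚ) ^ 5) * X ^ 3)
      * (PowerSeries.mk fun k : ℕ =>
          ((1 + (q : ℚ) ^ 2 - 2 * (q : ℚ) ^ (2 * k + 1) * (1 + (q : ℚ) + (q : ℚ) ^ 2)
            + (q : ℚ) ^ (3 * k + 1) * (1 + (q : ℚ) + (q : ℚ) ^ 2 + (q : ℚ) ^ 3))
            / (((q : ℚ) - 1) ^ 2 * (1 + (q : ℚ) + (q : ℚ) ^ 2))))
    = 1 + PowerSeries.C ((q : ℚ) + (q : ℚ) ^ 2) * X
        + PowerSeries.C ((q : ℚ) ^ 3) * X ^ 2 := by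
  have hq1 : (q : ℚ) - 1 ≠ 0 := by
    have : (2 : ℚ) ≤ (q : ℚ) := by exact_mod_cast hq
    intro h; nlinarith
  have hq2 : (1 : ℚ) + (q : ℚ) + (q : ℚ) ^ 2 ≠ 0 := by
    have : (2 : ℚ) ≤ (q : ℚ) := by exact_mod_cast hq
    intro h; nlinarith
  constructor
  · intro k
    induction k with
    | zero => exact ⟨1, by ring⟩
    | succ k ih =>
      obtain ⟨g, hg⟩ := sub_dvd_pow_sub_pow q 1 (2 * k + 3)
      obtain ⟨e, he⟩ := ih
      refine ⟨q ^ 3 * e + (2 * g - (q + 1)), ?_⟩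
      have h1 : q ^ (2 * k + 3) - 1 = (q - 1) * g := by simpa using hg
      have h2 : (1 : ℤ) + q ^ 2 - 2 * q ^ (2 * k + 1) * (1 + q + q ^ 2)
        + q ^ (3 * k + 1) * (1 + q + q ^ 2 + q ^ 3)
        = (q - 1) ^ 2 * (1 + q + q ^ 2) * e := he
      linear_combination q ^ 3 * h2
        + ((q - 1) * (1 + q + q ^ 2) * 2) * h1
  · obtain ⟨f, hf⟩ : ∃ f : ℕ → ℚ, ∀ k : ℕ, f k =
      ((1 + (q : ℚ) ^ 2 - 2 * (q : ℚ) ^ (2 * k + 1) * (1 + (q : ℚ) + (q : ℚ) ^ 2)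
        + (q : ℚ) ^ (3 * k + 1) * (1 + (q : ℚ) + (q : ℚ) ^ 2 + (q : ℚ) ^ 3))
        / (((q : ℚ) - 1) ^ 2 * (1 + (q : ℚ) + (q : ℚ) ^ 2))) := ⟨_, fun k => rfl⟩
    obtain ⟨a, ha⟩ : ∃ a : ℚ, a = 1 + (q : ℚ) ^ 2 + (q : ℚ) ^ 3 := ⟨_, rfl⟩
    obtain ⟨b, hb⟩ : ∃ b : ℚ, b = (q : ℚ) ^ 2 + (q : ℚ) ^ 3 + (q : ℚ) ^ 5 := ⟨_, rfl⟩
    obtain ⟨c, hc⟩ : ∃ c : ℚ, c = (q : ℚ) ^ 5 := ⟨_, rfl⟩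
    obtain ⟨u, hu⟩ : ∃ u : ℚ, u = (q : ℚ) + (q : ℚ) ^ 2 := ⟨_, rfl⟩
    obtain ⟨v, hv⟩ : ∃ v : ℚ, v = (q : ℚ) ^ 3 := ⟨_, rfl⟩
    have hmk : (PowerSeries.mk fun k : ℕ =>
          ((1 + (q : ℚ) ^ 2 - 2 * (q : ℚ) ^ (2 * k + 1) * (1 + (q : ℚ) + (q : ℚ) ^ 2)
            + (q : ℚ) ^ (3 * k + 1) * (1 + (q : ℚ) + (q : ℚ) ^ 2 + (q : ℚ) ^ 3))
            / (((q : ℚ) - 1) ^ 2 * (1 + (q : ℚ) + (q : ℚ) ^ 2))))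
        = PowerSeries.mk f := by
      ext k
      simp [hf]
    rw [hmk, ← ha, ← hb, ← hc, ← hu, ← hv]
    have hrw : (1 - PowerSeries.C a * X + PowerSeries.C b * X ^ 2
        - PowerSeries.C c * X ^ 3) * PowerSeries.mk f
      = PowerSeries.mk f
        - (PowerSeries.C a * PowerSeries.mk f) * X ^ 1
        + (PowerSeries.C b * PowerSeries.mk f) * X ^ 2
        - (PowerSeries.C c * PowerSeries.mk f) * X ^ 3 := by ring
    rw [hrw]
    ext n
    simp only [map_sub, map_add, PowerSeries.coeff_mul_X_pow', PowerSeries.coeff_C_mul,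
      PowerSeries.coeff_mk, PowerSeries.coeff_one, PowerSeries.coeff_X, PowerSeries.coeff_X_pow]
    match n with
    | 0 =>
      norm_num
      rw [hf]
      field_simp
      ring
    | 1 =>
      norm_num
      rw [hf, hf, ha, hu]
      field_simp
      ring
    | 2 =>
      norm_num
      rw [hf, hf, hf, ha, hb, hv]
      field_simp
      ring
    | (m + 3) =>
      have e1 : m + 3 - 1 = m + 2 := by omega
      have e2 : m + 3 - 2 = m + 1 := by omega
      have e3 : m + 3 - 3 = m := by omega
      simp only [show (1:ℕ) ≤ m + 3 by omega, show (2:ℕ) ≤ m + 3 by omega,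
        show (3:ℕ) ≤ m + 3 by omega, if_true, e1, e2, e3,
        if_neg (by omega : ¬ m + 3 = 0), if_neg (by omega : ¬ m + 3 = 1),
        if_neg (by omega : ¬ m + 3 = 2), PowerSeries.coeff_C, if_neg (by omega : ¬ m + 1 = 0)]
      rw [hf, hf, hf, hf, ha, hb, hc]
      field_simp
      ring
end

section
/- Let q be an integer with q ≥ 2. Define the sequence c(k) for k ≥ 0 by c(0)=1, c(1)=1+q+2q²+q³, c(2)=1+q+2q²+3q³+3q⁴+2q⁵+q⁶, and the recurrence c(k+3) = (1+q²+q³)c(k+2) - (q²+q³+q⁵)c(k+1) + q⁵c(k) for k ≥ 0. Then c(k) = (1 + q² - 2q^{2k+1}(1+q+q²) + q^{3k+1}(1+q+q²+q³)) / ((q-1)²(1+q+q²)) for all k ≥ 0. -/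
/-- The sequence defined by the stated initial values and three-term recurrence
has the stated closed form. -/
theorem stmt_14 (q : ℤ) (hq : 2 ≤ q) (c : ℕ → ℚ)
    (h0 : c 0 = 1)
    (h1 : c 1 = 1 + (q : ℚ) + 2 * (q : ℚ) ^ 2 + (q : ℚ) ^ 3)
    (h2 : c 2 = 1 + (q : ℚ) + 2 * (q : ℚ) ^ 2 + 3 * (q : ℚ) ^ 3 + 3 * (q : ℚ) ^ 4
      + 2 * (q : ℚ) ^ 5 + (q : ℚ) ^ 6)
    (hrec : ∀ k : ℕ, c (k + 3) = (1 + (q : ℚ) ^ 2 + (q : ℚ) ^ 3) * c (k + 2)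
      - ((q : ℚ) ^ 2 + (q : ℚ) ^ 3 + (q : ℚ) ^ 5) * c (k + 1) + (q : ℚ) ^ 5 * c k) :
    ∀ k : ℕ, c k =
      (1 + (q : ℚ) ^ 2 - 2 * (q : ℚ) ^ (2 * k + 1) * (1 + (q : ℚ) + (q : ℚ) ^ 2)
        + (q : ℚ) ^ (3 * k + 1) * (1 + (q : ℚ) + (q : ℚ) ^ 2 + (q : ℚ) ^ 3))
        / (((q : ℚ) - 1) ^ 2 * (1 + (q : ℚ) + (q : ℚ) ^ 2)) := by
  set Q : ℚ := (q : ℚ) with hQdef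
  have hQ2 : (2 : ℚ) ≤ Q := by rw [hQdef]; exact_mod_cast hq
  have h1ne : Q - 1 ≠ 0 := by nlinarith
  have h2ne : 1 + Q + Q ^ 2 ≠ 0 := by nlinarith
  have hden : (Q - 1) ^ 2 * (1 + Q + Q ^ 2) ≠ 0 := by
    exact mul_ne_zero (pow_ne_zero _ h1ne) h2ne
  set f : ℕ → ℚ := fun k =>
      (1 + Q ^ 2 - 2 * Q ^ (2 * k + 1) * (1 + Q + Q ^ 2)
        + Q ^ (3 * k + 1) * (1 + Q + Q ^ 2 + Q ^ 3))
        / ((Q - 1) ^ 2 * (1 + Q + Q ^ 2)) with hf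
  suffices h : ∀ k : ℕ, c k = f k ∧ c (k + 1) = f (k + 1) ∧ c (k + 2) = f (k + 2) by
    exact fun k => (h k).1
  intro k
  induction k with
  | zero =>
    refine ⟨?_, ?_, ?_⟩ <;> simp only [hf, h0, h1, h2] <;>
      field_simp <;> ring
  | succ n ih =>
    refine ⟨ih.2.1, ih.2.2, ?_⟩
    have := hrec n
    rw [ih.1, ih.2.1, ih.2.2] at this
    show c (n + 3) = f (n + 3)
    rw [this, hf]
    simp only
    rw [show 2 * (n + 3) + 1 = (2 * n + 1) + 6 from by ring,
        show 3 * (n + 3) + 1 = (3 * n + 1) + 9 from by ring,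
        show 2 * (n + 2) + 1 = (2 * n + 1) + 4 from by ring,
        show 3 * (n + 2) + 1 = (3 * n + 1) + 6 from by ring,
        show 2 * (n + 1) + 1 = (2 * n + 1) + 2 from by ring,
        show 3 * (n + 1) + 1 = (3 * n + 1) + 3 from by ring]
    simp only [pow_add]
    field_simp
    ring
end

section
/- Let q ≥ 2 be an integer and consider the graded free ℤ-algebra on v, x (degree 1) and y₁, y₂ (degree 2), modulo the seven relations r₁,...,r₇ of the paramodular Hecke algebra presentation. Then the images of v and y₁ do not commute in the quotient; in particular the quotient algebra is non-commutative. -/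
noncomputable section

-- ### A 7-dimensional representation (degree ≤ 3 truncation of the algebra)

abbrev M7 : Type := Matrix (Fin 7) (Fin 7) ℤ

abbrev E (i j : Fin 7) (c : ℤ) : M7 := Matrix.single i j c

def Vm : M7 := E 1 0 1 + E 5 3 1 + E 6 4 1
def Xm (q : ℤ) : M7 :=
  E 2 0 1 + E 5 3 (q^2-1) + E 5 4 (1-q^2) + E 6 3 (1-q^2) + E 6 4 (q^2-1)
def Y1m : M7 := E 3 0 1 + E 6 1 1
def Y2m : M7 := E 4 0 1 + E 5 1 1

section products

lemma pVY1 : Vm * Y1m = E 5 0 1 := by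
  simp (config := { decide := true }) [Vm, Y1m, add_mul, mul_add,
    Matrix.single_mul_single_same, Matrix.single_mul_single_of_ne]
lemma pVY2 : Vm * Y2m = E 6 0 1 := by
  simp (config := { decide := true }) [Vm, Y2m, add_mul, mul_add,
    Matrix.single_mul_single_same, Matrix.single_mul_single_of_ne]
lemma pY1V : Y1m * Vm = E 6 0 1 := by
  simp (config := { decide := true }) [Vm, Y1m, add_mul, mul_add,
    Matrix.single_mul_single_same, Matrix.single_mul_single_of_ne]
lemma pY2V : Y2m * Vm = E 5 0 1 := by
  simp (config := { decide := true }) [Vm, Y2m, add_mul, mul_add,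
    Matrix.single_mul_single_same, Matrix.single_mul_single_of_ne]
lemma pVX (q : ℤ) : Vm * Xm q = 0 := by
  simp (config := { decide := true }) [Vm, Xm, add_mul, mul_add,
    Matrix.single_mul_single_same, Matrix.single_mul_single_of_ne]
lemma pXV (q : ℤ) : Xm q * Vm = 0 := by
  simp (config := { decide := true }) [Vm, Xm, add_mul, mul_add,
    Matrix.single_mul_single_same, Matrix.single_mul_single_of_ne]
lemma pXY1 (q : ℤ) : Xm q * Y1m = E 5 0 (q^2-1) + E 6 0 (1-q^2) := by
  simp (config := { decide := true }) [Xm, Y1m, add_mul, mul_add,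
    Matrix.single_mul_single_same, Matrix.single_mul_single_of_ne]
lemma pY1X (q : ℤ) : Y1m * Xm q = 0 := by
  simp (config := { decide := true }) [Xm, Y1m, add_mul, mul_add,
    Matrix.single_mul_single_same, Matrix.single_mul_single_of_ne]
lemma pXY2 (q : ℤ) : Xm q * Y2m = E 5 0 (1-q^2) + E 6 0 (q^2-1) := by
  simp (config := { decide := true }) [Xm, Y2m, add_mul, mul_add,
    Matrix.single_mul_single_same, Matrix.single_mul_single_of_ne]
lemma pY2X (q : ℤ) : Y2m * Xm q = 0 := by
  simp (config := { decide := true }) [Xm, Y2m, add_mul, mul_add,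
    Matrix.single_mul_single_same, Matrix.single_mul_single_of_ne]
lemma pVV : Vm * Vm = 0 := by
  simp (config := { decide := true }) [Vm, add_mul, mul_add,
    Matrix.single_mul_single_same, Matrix.single_mul_single_of_ne]
lemma pY1Y2 : Y1m * Y2m = 0 := by
  simp (config := { decide := true }) [Y1m, Y2m, add_mul, mul_add,
    Matrix.single_mul_single_same, Matrix.single_mul_single_of_ne]
lemma pY2Y1 : Y2m * Y1m = 0 := by
  simp (config := { decide := true }) [Y1m, Y2m, add_mul, mul_add,
    Matrix.single_mul_single_same, Matrix.single_mul_single_of_ne]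

lemma pV2 : Vm ^ 2 = 0 := by rw [pow_two, pVV]
lemma pV3 : Vm ^ 3 = 0 := by rw [pow_succ, pV2, zero_mul]
lemma pV4 : Vm ^ 4 = 0 := by rw [pow_succ, pV3, zero_mul]

lemma cast_mul (c : ℤ) (A : M7) : (c : M7) * A = c • A := (zsmul_eq_mul A c).symm

end products

def f (q : ℤ) : Fin 4 → M7 := ![Vm, Xm q, Y1m, Y2m]

def φ₀ (q : ℤ) : R →ₐ[ℤ] M7 := FreeAlgebra.lift ℤ (f q)

lemma φ₀_v (q : ℤ) : φ₀ q v = Vm := by simp [φ₀, v, f]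
lemma φ₀_x (q : ℤ) : φ₀ q x = Xm q := by simp [φ₀, x, f]
lemma φ₀_y₁ (q : ℤ) : φ₀ q y₁ = Y1m := by simp [φ₀, y₁, f]
lemma φ₀_y₂ (q : ℤ) : φ₀ q y₂ = Y2m := by simp [φ₀, y₂, f]
lemma φ₀_q (q : ℤ) : φ₀ q ((q : R)) = (q : M7) := map_intCast _ q

lemma φ₀_rel (q : ℤ) : ∀ a b : R, rel q a b → φ₀ q a = φ₀ q b := by
  rintro a b ⟨rfl, h⟩
  rw [map_zero]
  rcases h with rfl | rfl | rfl | rfl | rfl | rfl | rfl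
  · simp only [r₁, map_sub, map_mul, φ₀_v, φ₀_x, pVX, pXV, sub_zero]
  · simp only [r₂, map_sub, map_mul, φ₀_v, φ₀_y₁, φ₀_y₂, pVY1, pY2V, sub_self]
  · simp only [r₃, map_sub, map_mul, φ₀_v, φ₀_y₁, φ₀_y₂, pVY2, pY1V, sub_self]
  · have hc : (1 - (q : M7) ^ 2) = ((1 - q ^ 2 : ℤ) : M7) := by push_cast; ring
    simp only [r₄, map_sub, map_add, map_mul, map_one, map_pow, φ₀_v, φ₀_x, φ₀_y₁,
      φ₀_y₂, φ₀_q, pXY1, pY1X, pVY1, pVY2, hc, cast_mul, Matrix.smul_single]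
    ext a b
    simp [Matrix.single]
    split_ifs <;> ring
  · have hc : (1 - (q : M7) ^ 2) = ((1 - q ^ 2 : ℤ) : M7) := by push_cast; ring
    simp only [r₅, map_sub, map_add, map_mul, map_one, map_pow, φ₀_v, φ₀_x, φ₀_y₁,
      φ₀_y₂, φ₀_q, pXY2, pY2X, pVY1, pVY2, hc, cast_mul, Matrix.smul_single]
    ext a b
    simp [Matrix.single]
    split_ifs <;> ring
  · simp only [r₆, map_sub, map_add, map_mul, map_one, map_pow, φ₀_v, φ₀_x, φ₀_y₁,
      φ₀_y₂, φ₀_q, pY1Y2, pY2Y1, pV2, pVX, zero_mul, mul_zero, sub_zero, add_zero,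
      sub_self, zero_sub, neg_zero, zero_add]
  · simp only [r₇, map_sub, map_add, map_mul, map_one, map_pow, φ₀_v, φ₀_x, φ₀_y₁,
      φ₀_y₂, φ₀_q, pY1Y2, pV2, pV3, pV4, pVX, zero_mul, mul_zero, sub_zero, add_zero,
      sub_self, zero_sub, neg_zero, zero_add]

def φ (q : ℤ) : H q →ₐ[ℤ] M7 := RingQuot.liftAlgHom ℤ ⟨φ₀ q, φ₀_rel q⟩

/-- For `q ≥ 2`, the images of `v` and `y₁` do not commute in `R/I`;
in particular the quotient algebra is non-commutative. -/
theorem stmt_18 (q : ℤ) (hq : 2 ≤ q) :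
    mk q v * mk q y₁ ≠ mk q y₁ * mk q v := by
  intro h
  have h2 := congrArg (φ q) h
  simp only [map_mul] at h2
  have hv : φ q (mk q v) = Vm := by
    rw [mk, φ, RingQuot.liftAlgHom_mkAlgHom_apply, φ₀_v]
  have hy : φ q (mk q y₁) = Y1m := by
    rw [mk, φ, RingQuot.liftAlgHom_mkAlgHom_apply, φ₀_y₁]
  rw [hv, hy, pVY1, pY1V] at h2
  have := congrArg (fun A : M7 => A 5 0) h2
  simp [Matrix.single] at this
end
end
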